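/- Fix γ > 1 and a constant state (v*, u*) ∈ (0,∞) × ℝ. There exist constants δ₀, C, C₀ > 0 such that for any ε, λ > 0 with ε/λ < δ₀ and λ < δ₀ the following holds. Let ṽ₀, h̃₀, w, b₁, b₂, a : ℝ → ℝ be measurable functions such that for all x ∈ ℝ: |ṽ₀(x) − v*| ≤ C δ₀, |h̃₀(x) − u*| ≤ C δ₀, ṽ₀(x) ≥ 1/C, and √(b₁(x)² + b₂(x)²) ≤ C (ε/λ) |w(x)|; assume w is either everywhere positive or everywhere negative on ℝ, b₁, b₂ ∈ L¹(ℝ), ∫_ℝ |w| dx = λ, and ‖a‖_{L∞(ℝ)} ≤ 1. Let v : ℝ → (0,∞) and h : ℝ → ℝ be measurable such that the functions x ↦ w(x)(|h(x) − h̃₀(x)|²/2 + Q(v(x)|ṽ₀(x))) and x ↦ a(x)(−b₁(x) p'(ṽ₀(x))(v(x) − ṽ₀(x)) + b₂(x)(h(x) − h̃₀(x))) are integrable, and define Y := ∫_ℝ w (|h − h̃₀|²/2 + Q(v|ṽ₀)) dx + ∫_ℝ a (−b₁ p'(ṽ₀)(v − ṽ₀) + b₂ (h − h̃₀)) dx.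 If sgn(w) · Y ≤ ε², then ∫_ℝ |w| |h − h̃₀|² dx + ∫_ℝ |w| Q(v|ṽ₀) dx ≤ C ε²/λ and |Y| ≤ C₀ ε²/λ. -/

import Mathlib

open MeasureTheory Real Set

/-- Pressure `p(v) = v^(-γ)`. -/
noncomputable def pres (γ v : ℝ) : ℝ := v ^ (-γ)

/-- Internal energy `Q(v) = v^(1-γ)/(γ-1)`. -/
noncomputable def Qint (γ v : ℝ) : ℝ := v ^ (1 - γ) / (γ - 1)

/-- Relative internal energy `Q(v|w) = Q(v) - Q(w) - Q'(w)(v-w)`, with `Q'(w) = -p(w)`. -/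
noncomputable def Qrel (γ v w : ℝ) : ℝ := Qint γ v - Qint γ w + pres γ w * (v - w)

/- ### Auxiliary lemmas -/

lemma deriv_lb {f f' : ℝ → ℝ} {A B m : ℝ} (hAB : A ≤ B)
    (hd : ∀ x ∈ Icc A B, HasDerivAt f (f' x) x)
    (hm : ∀ x ∈ Icc A B, m ≤ f' x) :
    f A + m * (B - A) ≤ f B := by
  have h := (convex_Icc A B).mul_sub_le_image_sub_of_le_deriv
    (fun x hx => (hd x hx).continuousAt.continuousWithinAt)
    (fun x hx => (hd x (interior_subset hx)).differentiableAt.differentiableWithinAt)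
    (fun x hx => by rw [(hd x (interior_subset hx)).deriv]; exact hm x (interior_subset hx))
    A (left_mem_Icc.2 hAB) B (right_mem_Icc.2 hAB) hAB
  linarith

lemma hasDerivAt_qrel {γ : ℝ} (hγ : 1 < γ) (t : ℝ) {x : ℝ} (hx : 0 < x) :
    HasDerivAt (fun v => Qrel γ v t) (t ^ (-γ) - x ^ (-γ)) x := by
  have hne : γ - 1 ≠ 0 := by linarith
  have h1 : HasDerivAt (fun v : ℝ => v ^ (1 - γ)) ((1 - γ) * x ^ (-γ)) x := by
    have := Real.hasDerivAt_rpow_const (p := 1 - γ) (Or.inl hx.ne')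
    convert this using 2
    ring
  have h3 := ((h1.div_const (γ - 1)).sub_const (Qint γ t)).add
    (((hasDerivAt_id x).sub_const t).const_mul (pres γ t))
  have heq : (1 - γ) * x ^ (-γ) / (γ - 1) + pres γ t * 1 = t ^ (-γ) - x ^ (-γ) := by
    unfold pres
    field_simp
    ring
  rw [heq] at h3
  exact h3

lemma pres_mono_bd' {γ : ℝ} (hγ : 0 < γ) {x y : ℝ} (hx : 0 < x) (hxy : x ≤ y) :
    y ^ (-γ) ≤ x ^ (-γ) :=
  Real.rpow_le_rpow_of_nonpos hx hxy (by linarith)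

lemma pow_exp_mono' {γ : ℝ} (hγ : 0 < γ) {x y : ℝ} (hx : 0 < x) (hxy : x ≤ y) :
    y ^ (-γ - 1) ≤ x ^ (-γ - 1) :=
  Real.rpow_le_rpow_of_nonpos hx hxy (by linarith)

/-- key quadratic lower bound for `v ≤ 2t` -/
lemma qrel_quad {γ : ℝ} (hγ : 1 < γ) {v t : ℝ} (hv : 0 < v) (ht : 0 < t) (hv2 : v ≤ 2 * t) :
    γ * (2 * t) ^ (-γ - 1) / 2 * (v - t) ^ 2 ≤ Qrel γ v t := by
  have hγ0 : 0 < γ := by linarith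
  set c : ℝ := γ * (2 * t) ^ (-γ - 1) / 2 with hc
  have hcpos : 0 < c := by
    have := Real.rpow_pos_of_pos (by linarith : (0:ℝ) < 2 * t) (-γ - 1)
    positivity
  have hqt : Qrel γ t t = 0 := by simp [Qrel]
  have hF : ∀ x : ℝ, 0 < x →
      HasDerivAt (fun y => Qrel γ y t - c * (y - t) ^ 2)
        (t ^ (-γ) - x ^ (-γ) - c * (2 * (x - t))) x := by
    intro x hx
    have h1 := hasDerivAt_qrel hγ t hx
    have h2 : HasDerivAt (fun y : ℝ => c * (y - t) ^ 2) (c * (2 * (x - t))) x := by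
      have h0 : HasDerivAt (fun y : ℝ => (y - t) ^ 2) (2 * (x - t)) x := by
        simpa using ((hasDerivAt_id x).sub_const t).fun_pow 2
      exact h0.const_mul c
    exact h1.sub h2
  have inner₁ : ∀ x, t ≤ x → x ≤ 2 * t → 2 * c * (x - t) ≤ t ^ (-γ) - x ^ (-γ) := by
    intro x hx1 hx2
    have := deriv_lb (f := fun y => -(y ^ (-γ))) (f' := fun y => γ * y ^ (-γ - 1))
      (A := t) (B := x) (m := 2 * c) hx1
      (fun y hy => by
        have hy0 : 0 < y := lt_of_lt_of_le ht hy.1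
        have h := (Real.hasDerivAt_rpow_const (p := -γ) (x := y) (Or.inl hy0.ne')).fun_neg
        exact h.congr_deriv (by ring))
      (fun y hy => by
        have hy0 : 0 < y := lt_of_lt_of_le ht hy.1
        have : (2 * t) ^ (-γ - 1) ≤ y ^ (-γ - 1) :=
          pow_exp_mono' hγ0 hy0 (le_trans hy.2 hx2)
        rw [hc]; nlinarith)
    linarith
  have inner₂ : ∀ x, 0 < x → x ≤ t → 2 * c * (t - x) ≤ x ^ (-γ) - t ^ (-γ) := by
    intro x hx0 hx1
    have := deriv_lb (f := fun y => -(y ^ (-γ))) (f' := fun y => γ * y ^ (-γ - 1))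
      (A := x) (B := t) (m := 2 * c) hx1
      (fun y hy => by
        have hy0 : 0 < y := lt_of_lt_of_le hx0 hy.1
        have h := (Real.hasDerivAt_rpow_const (p := -γ) (x := y) (Or.inl hy0.ne')).fun_neg
        exact h.congr_deriv (by ring))
      (fun y hy => by
        have hy0 : 0 < y := lt_of_lt_of_le hx0 hy.1
        have : (2 * t) ^ (-γ - 1) ≤ y ^ (-γ - 1) :=
          pow_exp_mono' hγ0 hy0 (le_trans hy.2 (by linarith))
        rw [hc]; nlinarith)
    linarith
  rcases le_total t v with hcase | hcase
  · have := deriv_lb (f := fun y => Qrel γ y t - c * (y - t) ^ 2)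
      (f' := fun x => t ^ (-γ) - x ^ (-γ) - c * (2 * (x - t))) (A := t) (B := v) (m := 0) hcase
      (fun x hx => hF x (lt_of_lt_of_le ht hx.1))
      (fun x hx => by
        have h := inner₁ x hx.1 (le_trans hx.2 hv2)
        linarith)
    rw [hqt] at this
    nlinarith [this]
  · have := deriv_lb (f := fun y => -(Qrel γ y t - c * (y - t) ^ 2))
      (f' := fun x => -(t ^ (-γ) - x ^ (-γ) - c * (2 * (x - t)))) (A := v) (B := t) (m := 0) hcase
      (fun x hx => (hF x (lt_of_lt_of_le hv hx.1)).neg)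
      (fun x hx => by
        have h := inner₂ x (lt_of_lt_of_le hv hx.1) hx.2
        linarith)
    rw [hqt] at this
    nlinarith [this]

/-- linear lower bound for `2t ≤ v` -/
lemma qrel_lin {γ : ℝ} (hγ : 1 < γ) {v t : ℝ} (ht : 0 < t) (hv : 2 * t ≤ v) :
    Qrel γ (2 * t) t + (t ^ (-γ) - (2 * t) ^ (-γ)) * (v - 2 * t) ≤ Qrel γ v t := by
  have hγ0 : 0 < γ := by linarith
  exact deriv_lb (f := fun y => Qrel γ y t) (f' := fun x => t ^ (-γ) - x ^ (-γ))
    (A := 2 * t) (B := v) hv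
    (fun x hx => hasDerivAt_qrel hγ t (lt_of_lt_of_le (by linarith) hx.1))
    (fun x hx => by
      have : x ^ (-γ) ≤ (2 * t) ^ (-γ) := pres_mono_bd' hγ0 (by linarith) hx.1
      linarith)

lemma qrel_nonneg {γ : ℝ} (hγ : 1 < γ) {v t : ℝ} (hv : 0 < v) (ht : 0 < t) :
    0 ≤ Qrel γ v t := by
  have hγ0 : 0 < γ := by linarith
  rcases le_total v (2 * t) with hcase | hcase
  · have h1 := qrel_quad hγ hv ht hcase
    have h2 : 0 ≤ γ * (2 * t) ^ (-γ - 1) / 2 * (v - t) ^ 2 := by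
      have := Real.rpow_pos_of_pos (by linarith : (0:ℝ) < 2 * t) (-γ - 1)
      positivity
    linarith
  · have h1 := qrel_lin hγ ht hcase
    have h2 := qrel_quad hγ (by linarith : (0:ℝ) < 2 * t) ht le_rfl
    have h3 : (2 * t) ^ (-γ) ≤ t ^ (-γ) := pres_mono_bd' hγ0 ht (by linarith)
    have h4 : 0 ≤ γ * (2 * t) ^ (-γ - 1) / 2 * (2 * t - t) ^ 2 := by
      have := Real.rpow_pos_of_pos (by linarith : (0:ℝ) < 2 * t) (-γ - 1)
      positivity
    have h5 : 0 ≤ (t ^ (-γ) - (2 * t) ^ (-γ)) * (v - 2 * t) :=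
      mul_nonneg (by linarith) (by linarith)
    linarith

noncomputable def cc2 (γ vstar : ℝ) : ℝ := γ * (3 * vstar) ^ (-γ - 1)
noncomputable def qq0 (γ vstar : ℝ) : ℝ := cc2 γ vstar / 2 * (vstar / 2) ^ 2
noncomputable def ss0 (γ vstar : ℝ) : ℝ := (3 * vstar / 2) ^ (-γ) * (1 - 2 ^ (-γ))
noncomputable def cc3 (γ vstar : ℝ) : ℝ := min (qq0 γ vstar / (3 * vstar)) (ss0 γ vstar / 2)

section
variable {γ vstar : ℝ} (hγ : 1 < γ) (hvstar : 0 < vstar)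
include hγ hvstar

lemma cc2_pos : 0 < cc2 γ vstar := by
  have := Real.rpow_pos_of_pos (by linarith : (0:ℝ) < 3 * vstar) (-γ - 1)
  unfold cc2; positivity

lemma qq0_pos : 0 < qq0 γ vstar := by
  have := cc2_pos hγ hvstar
  unfold qq0; positivity

lemma ss0_pos : 0 < ss0 γ vstar := by
  have h1 : (0:ℝ) < (3 * vstar / 2) ^ (-γ) :=
    Real.rpow_pos_of_pos (by linarith) _
  have h2 : (2:ℝ) ^ (-γ) < 1 :=
    Real.rpow_lt_one_of_one_lt_of_neg (by norm_num) (by linarith)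
  unfold ss0; nlinarith

lemma cc3_pos : 0 < cc3 γ vstar := by
  have h1 := qq0_pos hγ hvstar
  have h2 := ss0_pos hγ hvstar
  unfold cc3
  apply lt_min <;> positivity
end

/-- Key pointwise absorption estimate. -/
lemma qrel_key {γ vstar : ℝ} (hγ : 1 < γ) (hvstar : 0 < vstar)
    {t v η : ℝ} (ht1 : vstar / 2 ≤ t) (ht2 : t ≤ 3 * vstar / 2) (hv : 0 < v)
    (hη0 : 0 ≤ η) (hη : η ≤ cc3 γ vstar / 2) :
    η * |v - t| ≤ Qrel γ v t / 2 + η ^ 2 / cc2 γ vstar := by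
  have hγ0 : 0 < γ := by linarith
  have ht0 : 0 < t := by linarith
  have hc2 := cc2_pos hγ hvstar
  have hc3 := cc3_pos hγ hvstar
  have hcc2le : cc2 γ vstar ≤ γ * (2 * t) ^ (-γ - 1) := by
    have h := pow_exp_mono' hγ0 (by linarith : (0:ℝ) < 2 * t) (by linarith : 2 * t ≤ 3 * vstar)
    unfold cc2; nlinarith
  rcases le_total v (2 * t) with hcase | hcase
  · have hq := qrel_quad hγ hv ht0 hcase
    have hq2 : cc2 γ vstar / 2 * (v - t) ^ 2 ≤ Qrel γ v t := by nlinarith [sq_nonneg (v - t)]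
    have hyoung : η * |v - t| ≤ cc2 γ vstar / 4 * (v - t) ^ 2 + η ^ 2 / cc2 γ vstar := by
      have h1 : |v - t| ^ 2 = (v - t) ^ 2 := sq_abs _
      have h2 : 0 ≤ |v - t| := abs_nonneg _
      have h3 := sq_nonneg (cc2 γ vstar * |v - t| - 2 * η)
      have h4 : cc2 γ vstar * (η ^ 2 / cc2 γ vstar) = η ^ 2 := by field_simp
      have hkey : cc2 γ vstar * (η * |v - t|) ≤
          cc2 γ vstar * (cc2 γ vstar / 4 * (v - t) ^ 2 + η ^ 2 / cc2 γ vstar) := by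
        rw [mul_add, h4, ← h1]
        nlinarith [h3]
      exact le_of_mul_le_mul_left hkey hc2
    linarith
  · have hq0 : qq0 γ vstar ≤ Qrel γ (2 * t) t := by
      have hq := qrel_quad hγ (by linarith : (0:ℝ) < 2 * t) ht0 le_rfl
      have ht2' : (vstar / 2) ^ 2 ≤ (2 * t - t) ^ 2 := by nlinarith
      unfold qq0
      nlinarith [sq_nonneg (2 * t - t)]
    have hs : ss0 γ vstar ≤ t ^ (-γ) - (2 * t) ^ (-γ) := by
      have hmul : (2 * t) ^ (-γ) = 2 ^ (-γ) * t ^ (-γ) :=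
        Real.mul_rpow (by norm_num) ht0.le
      have h1 : (3 * vstar / 2) ^ (-γ) ≤ t ^ (-γ) := pres_mono_bd' hγ0 ht0 ht2
      have h2 : (2:ℝ) ^ (-γ) < 1 :=
        Real.rpow_lt_one_of_one_lt_of_neg (by norm_num) (by linarith)
      have h3 : (0:ℝ) < (3 * vstar / 2) ^ (-γ) := Real.rpow_pos_of_pos (by linarith) _
      rw [hmul]
      unfold ss0
      nlinarith
    have hlin : qq0 γ vstar + ss0 γ vstar * (v - 2 * t) ≤ Qrel γ v t := by
      have h := qrel_lin hγ ht0 hcase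
      have h2 : ss0 γ vstar * (v - 2 * t) ≤ (t ^ (-γ) - (2 * t) ^ (-γ)) * (v - 2 * t) :=
        mul_le_mul_of_nonneg_right hs (by linarith)
      linarith
    have habs : |v - t| = v - t := abs_of_nonneg (by linarith)
    have hs0 := ss0_pos hγ hvstar
    have hq0' := qq0_pos hγ hvstar
    have hclaim : cc3 γ vstar * (v - t) ≤ Qrel γ v t := by
      have hmin1 : cc3 γ vstar ≤ qq0 γ vstar / (3 * vstar) := min_le_left _ _
      have hmin2 : cc3 γ vstar ≤ ss0 γ vstar / 2 := min_le_right _ _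
      rcases le_total (v - t) (3 * vstar) with hd | hd
      · have h1 : cc3 γ vstar * (v - t) ≤ qq0 γ vstar := by
          calc cc3 γ vstar * (v - t) ≤ (qq0 γ vstar / (3 * vstar)) * (3 * vstar) := by
                apply mul_le_mul hmin1 hd (by linarith) (by positivity)
            _ = qq0 γ vstar := by field_simp
        nlinarith [mul_nonneg hs0.le (by linarith : (0:ℝ) ≤ v - 2 * t)]
      · have h1 : (v - t) / 2 ≤ v - 2 * t := by linarith
        have h2 : ss0 γ vstar * ((v - t) / 2) ≤ ss0 γ vstar * (v - 2 * t) :=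
          mul_le_mul_of_nonneg_left h1 hs0.le
        nlinarith
    rw [habs]
    have h1 : η * (v - t) ≤ (cc3 γ vstar / 2) * (v - t) :=
      mul_le_mul_of_nonneg_right hη (by linarith)
    have h2 : 0 ≤ η ^ 2 / cc2 γ vstar := by positivity
    linarith

set_option maxHeartbeats 4000000

/-- Proposition 4.2 of the paper: smallness of the weighted relative entropy under a
one-sided bound on the functional `Y`.  Here `p'(v) = -γ v^(-γ-1)`. -/
theorem smallness_weighted_relative_entropy
    (γ : ℝ) (hγ : 1 < γ) (vstar ustar : ℝ) (hvstar : 0 < vstar) :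
    ∃ δ₀ C C₀ : ℝ, 0 < δ₀ ∧ 0 < C ∧ 0 < C₀ ∧
      ∀ ε lam : ℝ, 0 < ε → 0 < lam → ε / lam < δ₀ → lam < δ₀ →
      ∀ tv th w b₁ b₂ a v h : ℝ → ℝ,
        (∀ x, |tv x - vstar| ≤ C * δ₀) →
        (∀ x, |th x - ustar| ≤ C * δ₀) →
        (∀ x, 1 / C ≤ tv x) →
        (∀ x, Real.sqrt ((b₁ x) ^ 2 + (b₂ x) ^ 2) ≤ C * (ε / lam) * |w x|) →
        ((∀ x, 0 < w x) ∨ (∀ x, w x < 0)) →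
        Integrable b₁ → Integrable b₂ → Integrable w →
        (∫ x, |w x|) = lam →
        (∀ x, |a x| ≤ 1) →
        (∀ x, 0 < v x) →
        Integrable (fun x => w x * ((h x - th x) ^ 2 / 2 + Qrel γ (v x) (tv x))) →
        Integrable (fun x => a x * (-(b₁ x) * (-γ * (tv x) ^ (-γ - 1)) * (v x - tv x)
            + b₂ x * (h x - th x))) →
        ∀ Y : ℝ,
          Y = (∫ x, w x * ((h x - th x) ^ 2 / 2 + Qrel γ (v x) (tv x)))
              + (∫ x, a x * (-(b₁ x) * (-γ * (tv x) ^ (-γ - 1)) * (v x - tv x)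
                  + b₂ x * (h x - th x))) →
          ((∀ x, 0 < w x) → Y ≤ ε ^ 2) →
          ((∀ x, w x < 0) → -Y ≤ ε ^ 2) →
          ((∫⁻ x, ENNReal.ofReal (|w x| * (h x - th x) ^ 2))
              + (∫⁻ x, ENNReal.ofReal (|w x| * Qrel γ (v x) (tv x)))
            ≤ ENNReal.ofReal (C * ε ^ 2 / lam)) ∧
          |Y| ≤ C₀ * ε ^ 2 / lam := by
  have hγ0 : 0 < γ := by linarith
  have hc2 := cc2_pos hγ hvstar
  have hc3 := cc3_pos hγ hvstar
  obtain ⟨M, hM_def⟩ : ∃ M : ℝ, M = γ * (vstar / 2) ^ (-γ - 1) := ⟨_, rfl⟩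
  have hM : 0 < M := by
    rw [hM_def]
    have := Real.rpow_pos_of_pos (by linarith : (0:ℝ) < vstar / 2) (-γ - 1)
    positivity
  obtain ⟨D, hD_def⟩ : ∃ D : ℝ, D = M ^ 2 / cc2 γ vstar + 1 := ⟨_, rfl⟩
  have hD1 : 1 ≤ D := by
    have h0 : 0 ≤ M ^ 2 / cc2 γ vstar := by positivity
    rw [hD_def]; linarith
  have hD0 : 0 < D := by linarith
  obtain ⟨C, hC_def⟩ : ∃ C : ℝ, C = min 1 (1 / (12 * D)) := ⟨_, rfl⟩
  have hC0 : 0 < C := by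
    rw [hC_def]; exact lt_min one_pos (by positivity)
  have hC1 : C ≤ 1 := by rw [hC_def]; exact min_le_left _ _
  have hCD : C * D ≤ 1 / 12 := by
    have hh : C ≤ 1 / (12 * D) := by rw [hC_def]; exact min_le_right _ _
    calc C * D ≤ (1 / (12 * D)) * D := mul_le_mul_of_nonneg_right hh hD0.le
      _ = 1 / 12 := by field_simp
  obtain ⟨K, hK_def⟩ : ∃ K : ℝ, K = C ^ 2 * D := ⟨_, rfl⟩
  have hK0 : 0 < K := by rw [hK_def]; positivity
  have hK : K ≤ C / 12 := by
    have heq : K = C * (C * D) := by rw [hK_def]; ring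
    rw [heq]
    calc C * (C * D) ≤ C * (1 / 12) := mul_le_mul_of_nonneg_left hCD hC0.le
      _ = C / 12 := by ring
  obtain ⟨δ₀, hδ_def⟩ :
      ∃ d : ℝ, d = min (min (C / 12) (vstar / (2 * C))) (cc3 γ vstar / (2 * C * M)) := ⟨_, rfl⟩
  have hδ0 : 0 < δ₀ := by
    rw [hδ_def]; exact lt_min (lt_min (by positivity) (by positivity)) (by positivity)
  have hδ1 : δ₀ ≤ C / 12 := by
    rw [hδ_def]; exact le_trans (min_le_left _ _) (min_le_left _ _)
  have hδ2 : C * δ₀ ≤ vstar / 2 := by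
    have hh : δ₀ ≤ vstar / (2 * C) := by
      rw [hδ_def]; exact le_trans (min_le_left _ _) (min_le_right _ _)
    calc C * δ₀ ≤ C * (vstar / (2 * C)) := mul_le_mul_of_nonneg_left hh hC0.le
      _ = vstar / 2 := by field_simp
  have hδ3 : C * δ₀ * M ≤ cc3 γ vstar / 2 := by
    have hh : δ₀ ≤ cc3 γ vstar / (2 * C * M) := by rw [hδ_def]; exact min_le_right _ _
    calc C * δ₀ * M ≤ C * (cc3 γ vstar / (2 * C * M)) * M :=
          mul_le_mul_of_nonneg_right (mul_le_mul_of_nonneg_left hh hC0.le) hM.le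
      _ = cc3 γ vstar / 2 := by field_simp
  refine ⟨δ₀, C, C, hδ0, hC0, hC0, ?_⟩
  intro ε lam hε hlam hrδ hlamδ tv th w b₁ b₂ a v h htv hth htvC hb hsign hib1 hib2 hiw
    hwint ha hv hwg he Y hY hY1 hY2
  obtain ⟨r, hr_def⟩ : ∃ r : ℝ, r = ε / lam := ⟨_, rfl⟩
  rw [← hr_def] at hrδ hb
  have hr0 : 0 < r := by rw [hr_def]; positivity
  have htv1 : ∀ x, vstar / 2 ≤ tv x := fun x => by
    have h1 := (abs_le.1 (htv x)).1
    linarith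
  have htv2 : ∀ x, tv x ≤ 3 * vstar / 2 := fun x => by
    have h1 := (abs_le.1 (htv x)).2
    linarith
  obtain ⟨g, hg_def⟩ :
      ∃ g : ℝ → ℝ, g = fun x => (h x - th x) ^ 2 / 2 + Qrel γ (v x) (tv x) := ⟨_, rfl⟩
  have hgx : ∀ x, g x = (h x - th x) ^ 2 / 2 + Qrel γ (v x) (tv x) := fun x => by
    rw [hg_def]
  have hg0 : ∀ x, 0 ≤ g x := fun x => by
    have hq := qrel_nonneg hγ (hv x) (lt_of_lt_of_le (by linarith) (htv1 x))
    have h2 : 0 ≤ (h x - th x) ^ 2 / 2 := by positivity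
    rw [hgx x]
    linarith
  have hwg2 : Integrable (fun x => w x * g x) :=
    hwg.congr (Filter.Eventually.of_forall fun x => by
      show w x * ((h x - th x) ^ 2 / 2 + Qrel γ (v x) (tv x)) = w x * g x
      rw [hgx x])
  have hawg : Integrable (fun x => |w x| * g x) :=
    hwg2.abs.congr (Filter.Eventually.of_forall fun x => by
      show |w x * g x| = |w x| * g x
      rw [abs_mul, abs_of_nonneg (hg0 x)])
  obtain ⟨I, hI_def⟩ : ∃ I : ℝ, I = ∫ x, |w x| * g x := ⟨_, rfl⟩
  have hI0 : 0 ≤ I := by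
    rw [hI_def]
    exact integral_nonneg fun x => mul_nonneg (abs_nonneg _) (hg0 x)
  -- pointwise bound on the error integrand
  have hpt : ∀ x, |a x * (-(b₁ x) * (-γ * (tv x) ^ (-γ - 1)) * (v x - tv x)
      + b₂ x * (h x - th x))| ≤ (1/2) * (|w x| * g x) + (K * r ^ 2) * |w x| := by
    intro x
    have ht0 : 0 < tv x := lt_of_lt_of_le (by linarith) (htv1 x)
    have hpow : (0:ℝ) < (tv x) ^ (-γ - 1) := Real.rpow_pos_of_pos ht0 _
    have hP : 0 < γ * (tv x) ^ (-γ - 1) := by positivity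
    have hPM : γ * (tv x) ^ (-γ - 1) ≤ M := by
      have hh := pow_exp_mono' hγ0 (by linarith : (0:ℝ) < vstar / 2) (htv1 x)
      rw [hM_def]; nlinarith
    have hb1 : |b₁ x| ≤ C * r * |w x| := by
      have h1 : |b₁ x| ≤ Real.sqrt ((b₁ x) ^ 2 + (b₂ x) ^ 2) := by
        rw [← Real.sqrt_sq_eq_abs]
        exact Real.sqrt_le_sqrt (by nlinarith [sq_nonneg (b₂ x)])
      exact h1.trans (hb x)
    have hb2 : |b₂ x| ≤ C * r * |w x| := by
      have h1 : |b₂ x| ≤ Real.sqrt ((b₁ x) ^ 2 + (b₂ x) ^ 2) := by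
        rw [← Real.sqrt_sq_eq_abs]
        exact Real.sqrt_le_sqrt (by nlinarith [sq_nonneg (b₁ x)])
      exact h1.trans (hb x)
    have hηle : C * r * (γ * (tv x) ^ (-γ - 1)) ≤ cc3 γ vstar / 2 := by
      have h1 : C * r * (γ * (tv x) ^ (-γ - 1)) ≤ C * r * M :=
        mul_le_mul_of_nonneg_left hPM (by positivity)
      have h2 : C * r * M ≤ C * δ₀ * M :=
        mul_le_mul_of_nonneg_right (mul_le_mul_of_nonneg_left hrδ.le hC0.le) hM.le
      linarith
    have hkey := qrel_key hγ hvstar (htv1 x) (htv2 x) (hv x)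
      (by positivity : (0:ℝ) ≤ C * r * (γ * (tv x) ^ (-γ - 1))) hηle
    have hη2 : (C * r * (γ * (tv x) ^ (-γ - 1))) ^ 2 / cc2 γ vstar
        ≤ (C * r) ^ 2 * M ^ 2 / cc2 γ vstar := by
      have h0 : (γ * (tv x) ^ (-γ - 1)) ^ 2 ≤ M ^ 2 := pow_le_pow_left₀ hP.le hPM 2
      have hh : (C * r * (γ * (tv x) ^ (-γ - 1))) ^ 2 ≤ (C * r) ^ 2 * M ^ 2 := by
        calc (C * r * (γ * (tv x) ^ (-γ - 1))) ^ 2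
            = (C * r) ^ 2 * (γ * (tv x) ^ (-γ - 1)) ^ 2 := by ring
          _ ≤ (C * r) ^ 2 * M ^ 2 := mul_le_mul_of_nonneg_left h0 (by positivity)
      gcongr
    have hyoungh : C * r * |h x - th x| ≤ (h x - th x) ^ 2 / 4 + (C * r) ^ 2 := by
      nlinarith [sq_nonneg (|h x - th x| - 2 * (C * r)), sq_abs (h x - th x),
        abs_nonneg (h x - th x)]
    have htri : |a x * (-(b₁ x) * (-γ * (tv x) ^ (-γ - 1)) * (v x - tv x)
        + b₂ x * (h x - th x))|
        ≤ |b₁ x| * (γ * (tv x) ^ (-γ - 1)) * |v x - tv x| + |b₂ x| * |h x - th x| := by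
      have hA1 : |(-(b₁ x)) * (-γ * (tv x) ^ (-γ - 1)) * (v x - tv x)|
          = |b₁ x| * (γ * (tv x) ^ (-γ - 1)) * |v x - tv x| := by
        rw [abs_mul, abs_mul, abs_neg, abs_mul, abs_neg, abs_of_pos hγ0, abs_of_pos hpow]
      have hA2 : |b₂ x * (h x - th x)| = |b₂ x| * |h x - th x| := abs_mul _ _
      calc |a x * (-(b₁ x) * (-γ * (tv x) ^ (-γ - 1)) * (v x - tv x) + b₂ x * (h x - th x))|
          = |a x| * |(-(b₁ x) * (-γ * (tv x) ^ (-γ - 1)) * (v x - tv x) + b₂ x * (h x - th x))| :=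
            abs_mul _ _
        _ ≤ 1 * |(-(b₁ x) * (-γ * (tv x) ^ (-γ - 1)) * (v x - tv x) + b₂ x * (h x - th x))| :=
            mul_le_mul_of_nonneg_right (ha x) (abs_nonneg _)
        _ = |(-(b₁ x) * (-γ * (tv x) ^ (-γ - 1)) * (v x - tv x) + b₂ x * (h x - th x))| :=
            one_mul _
        _ ≤ |(-(b₁ x)) * (-γ * (tv x) ^ (-γ - 1)) * (v x - tv x)| + |b₂ x * (h x - th x)| :=
            abs_add_le _ _
        _ = |b₁ x| * (γ * (tv x) ^ (-γ - 1)) * |v x - tv x| + |b₂ x| * |h x - th x| := by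
            rw [hA1, hA2]
    have hstep2 : |b₁ x| * (γ * (tv x) ^ (-γ - 1)) * |v x - tv x| + |b₂ x| * |h x - th x|
        ≤ |w x| * (C * r * (γ * (tv x) ^ (-γ - 1)) * |v x - tv x|)
          + |w x| * (C * r * |h x - th x|) := by
      have e1 : |b₁ x| * (γ * (tv x) ^ (-γ - 1)) * |v x - tv x|
          ≤ (C * r * |w x|) * (γ * (tv x) ^ (-γ - 1)) * |v x - tv x| :=
        mul_le_mul_of_nonneg_right (mul_le_mul_of_nonneg_right hb1 hP.le) (abs_nonneg _)
      have e2 : |b₂ x| * |h x - th x| ≤ (C * r * |w x|) * |h x - th x| :=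
        mul_le_mul_of_nonneg_right hb2 (abs_nonneg _)
      have e3 : (C * r * |w x|) * (γ * (tv x) ^ (-γ - 1)) * |v x - tv x|
          = |w x| * (C * r * (γ * (tv x) ^ (-γ - 1)) * |v x - tv x|) := by ring
      have e4 : (C * r * |w x|) * |h x - th x| = |w x| * (C * r * |h x - th x|) := by ring
      linarith [e1, e2, e3.le, e4.le, e3.ge, e4.ge]
    have hstep3 : |w x| * (C * r * (γ * (tv x) ^ (-γ - 1)) * |v x - tv x|)
          + |w x| * (C * r * |h x - th x|)
        ≤ (1/2) * (|w x| * g x) + (K * r ^ 2) * |w x| := by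
      have f1 : C * r * (γ * (tv x) ^ (-γ - 1)) * |v x - tv x|
          ≤ Qrel γ (v x) (tv x) / 2 + (C * r) ^ 2 * M ^ 2 / cc2 γ vstar := by
        linarith [hkey, hη2]
      have f2 : |w x| * (C * r * (γ * (tv x) ^ (-γ - 1)) * |v x - tv x|)
          ≤ |w x| * (Qrel γ (v x) (tv x) / 2 + (C * r) ^ 2 * M ^ 2 / cc2 γ vstar) :=
        mul_le_mul_of_nonneg_left f1 (abs_nonneg _)
      have f3 : |w x| * (C * r * |h x - th x|)
          ≤ |w x| * ((h x - th x) ^ 2 / 4 + (C * r) ^ 2) :=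
        mul_le_mul_of_nonneg_left hyoungh (abs_nonneg _)
      have f4 : (C * r) ^ 2 * M ^ 2 / cc2 γ vstar + (C * r) ^ 2 = K * r ^ 2 := by
        rw [hK_def, hD_def]
        field_simp
      have f5 : |w x| * (Qrel γ (v x) (tv x) / 2 + (C * r) ^ 2 * M ^ 2 / cc2 γ vstar)
            + |w x| * ((h x - th x) ^ 2 / 4 + (C * r) ^ 2)
          = (1/2) * (|w x| * g x) + (K * r ^ 2) * |w x| := by
        rw [hgx x, ← f4]
        ring
      linarith
    linarith [htri, hstep2, hstep3]
  -- bound on the error integral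
  have hdom : Integrable (fun x => (1/2) * (|w x| * g x) + (K * r ^ 2) * |w x|) :=
    (hawg.const_mul _).add ((hiw.abs).const_mul _)
  have hErr : |∫ x, a x * (-(b₁ x) * (-γ * (tv x) ^ (-γ - 1)) * (v x - tv x)
      + b₂ x * (h x - th x))| ≤ (1/2) * I + K * r ^ 2 * lam := by
    have h1 := norm_integral_le_integral_norm
      (fun x => a x * (-(b₁ x) * (-γ * (tv x) ^ (-γ - 1)) * (v x - tv x)
        + b₂ x * (h x - th x))) (μ := volume)
    simp only [Real.norm_eq_abs] at h1
    have h2 : (∫ x, |a x * (-(b₁ x) * (-γ * (tv x) ^ (-γ - 1)) * (v x - tv x)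
        + b₂ x * (h x - th x))|)
        ≤ ∫ x, ((1/2) * (|w x| * g x) + (K * r ^ 2) * |w x|) :=
      integral_mono he.abs hdom hpt
    have h3 : (∫ x, ((1/2) * (|w x| * g x) + (K * r ^ 2) * |w x|))
        = (1/2) * I + K * r ^ 2 * lam := by
      rw [integral_add (hawg.const_mul _) ((hiw.abs).const_mul _),
        integral_const_mul, integral_const_mul, hwint, ← hI_def]
    linarith
  have hrlam : K * r ^ 2 * lam = K * (ε ^ 2 / lam) := by
    rw [hr_def]
    field_simp
  have hεδ : ε ^ 2 ≤ δ₀ * (ε ^ 2 / lam) := by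
    have hpos : 0 < ε ^ 2 / lam := by positivity
    have heq : ε ^ 2 = lam * (ε ^ 2 / lam) := by field_simp
    nlinarith
  -- main energy bound
  have hIbound : I ≤ (2 * δ₀ + 2 * K) * (ε ^ 2 / lam) := by
    have hexp : (2 * δ₀ + 2 * K) * (ε ^ 2 / lam)
        = 2 * (δ₀ * (ε ^ 2 / lam)) + 2 * (K * (ε ^ 2 / lam)) := by ring
    rcases hsign with hpos | hneg
    · have hEI : (∫ x, w x * ((h x - th x) ^ 2 / 2 + Qrel γ (v x) (tv x))) = I := by
        rw [hI_def]
        apply integral_congr_ae (Filter.Eventually.of_forall fun x => ?_)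
        rw [hgx x, abs_of_pos (hpos x)]
      have hY1' := hY1 hpos
      rw [hY, hEI] at hY1'
      have habs : -((1/2) * I + K * r ^ 2 * lam)
          ≤ (∫ x, a x * (-(b₁ x) * (-γ * (tv x) ^ (-γ - 1)) * (v x - tv x)
            + b₂ x * (h x - th x))) := (abs_le.1 hErr).1
      rw [hexp]
      linarith [hrlam, hεδ]
    · have hEI : (∫ x, w x * ((h x - th x) ^ 2 / 2 + Qrel γ (v x) (tv x))) = -I := by
        rw [hI_def, ← integral_neg]
        apply integral_congr_ae (Filter.Eventually.of_forall fun x => ?_)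
        have hwa : |w x| = -w x := abs_of_neg (hneg x)
        rw [hgx x, hwa]
        ring
      have hY2' := hY2 hneg
      rw [hY, hEI] at hY2'
      have habs : (∫ x, a x * (-(b₁ x) * (-γ * (tv x) ^ (-γ - 1)) * (v x - tv x)
          + b₂ x * (h x - th x))) ≤ (1/2) * I + K * r ^ 2 * lam := (abs_le.1 hErr).2
      rw [hexp]
      linarith [hrlam, hεδ]
  have hpos2 : 0 < ε ^ 2 / lam := by positivity
  constructor
  · -- lintegral bound
    have hl1 : (∫⁻ x, ENNReal.ofReal (|w x| * (h x - th x) ^ 2)) ≤ ENNReal.ofReal (2 * I) := by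
      have heq : ENNReal.ofReal (∫ x, 2 * (|w x| * g x))
          = ∫⁻ x, ENNReal.ofReal (2 * (|w x| * g x)) :=
        ofReal_integral_eq_lintegral_ofReal (hawg.const_mul 2)
          (Filter.Eventually.of_forall fun x =>
            mul_nonneg (by norm_num) (mul_nonneg (abs_nonneg _) (hg0 x)))
      have hmono : (∫⁻ x, ENNReal.ofReal (|w x| * (h x - th x) ^ 2))
          ≤ ∫⁻ x, ENNReal.ofReal (2 * (|w x| * g x)) := by
        apply lintegral_mono fun x => ENNReal.ofReal_le_ofReal ?_
        have hq := qrel_nonneg hγ (hv x) (lt_of_lt_of_le (by linarith) (htv1 x))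
        have hw0 : 0 ≤ |w x| := abs_nonneg _
        rw [hgx x]
        nlinarith [mul_nonneg hw0 hq]
      have h2I : (∫ x, 2 * (|w x| * g x)) = 2 * I := by
        rw [integral_const_mul, ← hI_def]
      calc (∫⁻ x, ENNReal.ofReal (|w x| * (h x - th x) ^ 2))
          ≤ ∫⁻ x, ENNReal.ofReal (2 * (|w x| * g x)) := hmono
        _ = ENNReal.ofReal (∫ x, 2 * (|w x| * g x)) := heq.symm
        _ = ENNReal.ofReal (2 * I) := by rw [h2I]
    have hl2 : (∫⁻ x, ENNReal.ofReal (|w x| * Qrel γ (v x) (tv x))) ≤ ENNReal.ofReal I := by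
      have heq : ENNReal.ofReal (∫ x, |w x| * g x) = ∫⁻ x, ENNReal.ofReal (|w x| * g x) :=
        ofReal_integral_eq_lintegral_ofReal hawg
          (Filter.Eventually.of_forall fun x => mul_nonneg (abs_nonneg _) (hg0 x))
      have hmono : (∫⁻ x, ENNReal.ofReal (|w x| * Qrel γ (v x) (tv x)))
          ≤ ∫⁻ x, ENNReal.ofReal (|w x| * g x) := by
        apply lintegral_mono fun x => ENNReal.ofReal_le_ofReal ?_
        have hw0 : 0 ≤ |w x| := abs_nonneg _
        rw [hgx x]
        nlinarith [mul_nonneg hw0 (sq_nonneg (h x - th x))]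
      calc (∫⁻ x, ENNReal.ofReal (|w x| * Qrel γ (v x) (tv x)))
          ≤ ∫⁻ x, ENNReal.ofReal (|w x| * g x) := hmono
        _ = ENNReal.ofReal (∫ x, |w x| * g x) := heq.symm
        _ = ENNReal.ofReal I := by rw [← hI_def]
    have hsum : ENNReal.ofReal (2 * I) + ENNReal.ofReal I = ENNReal.ofReal (3 * I) := by
      rw [← ENNReal.ofReal_add (by linarith) hI0]
      congr 1
      ring
    have hfin : (3 : ℝ) * I ≤ C * ε ^ 2 / lam := by
      have hcoef : 3 * (2 * δ₀ + 2 * K) ≤ C := by linarith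
      have h2 := mul_le_mul_of_nonneg_right hcoef hpos2.le
      have h3 : C * (ε ^ 2 / lam) = C * ε ^ 2 / lam := by ring
      nlinarith [hIbound]
    calc (∫⁻ x, ENNReal.ofReal (|w x| * (h x - th x) ^ 2))
          + (∫⁻ x, ENNReal.ofReal (|w x| * Qrel γ (v x) (tv x)))
        ≤ ENNReal.ofReal (2 * I) + ENNReal.ofReal I := add_le_add hl1 hl2
      _ = ENNReal.ofReal (3 * I) := hsum
      _ ≤ ENNReal.ofReal (C * ε ^ 2 / lam) := ENNReal.ofReal_le_ofReal hfin
  · -- |Y| bound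
    have hEabs : |∫ x, w x * ((h x - th x) ^ 2 / 2 + Qrel γ (v x) (tv x))| ≤ I := by
      have h1 := norm_integral_le_integral_norm
        (fun x => w x * ((h x - th x) ^ 2 / 2 + Qrel γ (v x) (tv x))) (μ := volume)
      simp only [Real.norm_eq_abs] at h1
      have h2 : (∫ x, |w x * ((h x - th x) ^ 2 / 2 + Qrel γ (v x) (tv x))|) = I := by
        rw [hI_def]
        apply integral_congr_ae (Filter.Eventually.of_forall fun x => ?_)
        rw [← hgx x]
        show |w x * g x| = |w x| * g x
        rw [abs_mul, abs_of_nonneg (hg0 x)]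
      linarith
    have hYabs : |Y| ≤ I + ((1/2) * I + K * r ^ 2 * lam) := by
      rw [hY]
      calc |(∫ x, w x * ((h x - th x) ^ 2 / 2 + Qrel γ (v x) (tv x)))
            + (∫ x, a x * (-(b₁ x) * (-γ * (tv x) ^ (-γ - 1)) * (v x - tv x)
                + b₂ x * (h x - th x)))|
          ≤ |∫ x, w x * ((h x - th x) ^ 2 / 2 + Qrel γ (v x) (tv x))|
            + |∫ x, a x * (-(b₁ x) * (-γ * (tv x) ^ (-γ - 1)) * (v x - tv x)
                + b₂ x * (h x - th x))| := abs_add_le _ _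
        _ ≤ I + ((1/2) * I + K * r ^ 2 * lam) := add_le_add hEabs hErr
    have hfin : I + ((1/2) * I + K * r ^ 2 * lam) ≤ C * ε ^ 2 / lam := by
      have hcoef : (3/2 : ℝ) * (2 * δ₀ + 2 * K) + K ≤ C := by linarith
      have h2 := mul_le_mul_of_nonneg_right hcoef hpos2.le
      have h3 : C * (ε ^ 2 / lam) = C * ε ^ 2 / lam := by ring
      nlinarith [hIbound, hrlam]
    linarith
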